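/- Let (X,d,W) be a complete UCW-hyperbolic space, C ⊆ X a nonempty closed convex subset and T : C → C nonexpansive. The following are equivalent: (i) T has a fixed point; (ii) there exists a bounded sequence (u_n) in C with lim_{n→∞} d(u_n, Tu_n) = 0; (iii) the sequence of Picard iterates (T^n x) is bounded for some x ∈ C; (iv) (T^n x) is bounded for all x ∈ C; (v) the Krasnoselski–Mann iteration (x_n) is bounded for some x ∈ C and some sequence (λ_n) in [0,1] satisfying one of the following: (a) λ_n = λ ∈ (0,1] constant; (b) lim_{n→∞} λ_n = 1; (c) limsup_n λ_n < 1 and Σ_{n=0}^∞ λ_n diverges; (vi) the Krasnoselski–Mann iteration (x_n) is bounded for all x ∈ C and all sequences (λ_n) in [0,1]. -/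

import Mathlib

open Set Filter Metric Bornology Function

/-- A `W`-hyperbolic space structure on a metric space `X` (Kohlenbach).
`W x y l` denotes `(1-l)x ⊕ l y`. -/
structure WHyp (X : Type*) [MetricSpace X] where
  W : X → X → ℝ → X
  W1 : ∀ (x y z : X), ∀ l ∈ Set.Icc (0:ℝ) 1,
    dist z (W x y l) ≤ (1 - l) * dist z x + l * dist z y
  W2 : ∀ (x y : X), ∀ l ∈ Set.Icc (0:ℝ) 1, ∀ l' ∈ Set.Icc (0:ℝ) 1,
    dist (W x y l) (W x y l') = |l - l'| * dist x y
  W3 : ∀ (x y : X), ∀ l ∈ Set.Icc (0:ℝ) 1, W x y l = W y x (1 - l)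
  W4 : ∀ (x y z w : X), ∀ l ∈ Set.Icc (0:ℝ) 1,
    dist (W x z l) (W y w l) ≤ (1 - l) * dist x y + l * dist z w

/-- `η` is a modulus of uniform convexity for the `W`-hyperbolic space `H`. -/
def WHyp.UnifConvex {X : Type*} [MetricSpace X] (H : WHyp X) (η : ℝ → ℝ → ℝ) : Prop :=
  (∀ r ε : ℝ, 0 < r → ε ∈ Set.Ioc (0:ℝ) 2 → η r ε ∈ Set.Ioc (0:ℝ) 1) ∧
  (∀ (r ε : ℝ) (a x y : X), 0 < r → ε ∈ Set.Ioc (0:ℝ) 2 →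
    dist x a ≤ r → dist y a ≤ r → ε * r ≤ dist x y →
    dist (H.W x y (1/2)) a ≤ (1 - η r ε) * r)

/-- A modulus of uniform convexity is monotone if it decreases in `r` for fixed `ε`. -/
def MonotoneModulus (η : ℝ → ℝ → ℝ) : Prop :=
  ∀ r s ε : ℝ, 0 < r → r ≤ s → ε ∈ Set.Ioc (0:ℝ) 2 → η s ε ≤ η r ε

/-- A subset `C` is convex in the `W`-hyperbolic space `H`. -/
def WHyp.ConvexSet {X : Type*} [MetricSpace X] (H : WHyp X) (C : Set X) : Prop :=
  ∀ x ∈ C, ∀ y ∈ C, ∀ l ∈ Set.Icc (0:ℝ) 1, H.W x y l ∈ C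

/-- The Krasnoselski–Mann iteration: `x₀ = x`, `x_{n+1} = (1-λ_n)x_n ⊕ λ_n T x_n`. -/
def WHyp.kmSeq {X : Type*} [MetricSpace X] (H : WHyp X) (T : X → X) (l : ℕ → ℝ)
    (x : X) : ℕ → X
  | 0 => x
  | n + 1 => H.W (H.kmSeq T l x n) (T (H.kmSeq T l x n)) (l n)

section Helpers


private lemma le_of_forall_pos_le_add' {a b : ℝ} (h : ∀ ε : ℝ, 0 < ε → a ≤ b + ε) : a ≤ b := by
  by_contra hab
  push_neg at hab
  have := h ((a - b) / 2) (by linarith)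
  linarith

private lemma ev_le_limsup_add (f : ℕ → ℝ) (M : ℝ) (hM : ∀ n, f n ≤ M) {ε : ℝ} (hε : 0 < ε) :
    ∀ᶠ n in atTop, f n ≤ Filter.limsup f atTop + ε := by
  have hb : Filter.IsBoundedUnder (· ≤ ·) atTop f := Filter.isBoundedUnder_of ⟨M, hM⟩
  exact (Filter.eventually_lt_of_limsup_lt (lt_add_of_pos_right _ hε) hb).mono fun n h => h.le

private lemma limsup_le' (f : ℕ → ℝ) (h0 : ∀ n, 0 ≤ f n) {a : ℝ}
    (h : ∀ᶠ n in atTop, f n ≤ a) : Filter.limsup f atTop ≤ a :=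
  Filter.limsup_le_of_le (Filter.isCoboundedUnder_le_of_le atTop h0) h

private lemma limsup_nonneg (f : ℕ → ℝ) (M : ℝ) (hM : ∀ n, f n ≤ M) (h0 : ∀ n, 0 ≤ f n) :
    0 ≤ Filter.limsup f atTop :=
  Filter.le_limsup_of_frequently_le (Filter.Frequently.of_forall h0)
    (Filter.isBoundedUnder_of ⟨M, hM⟩)

private lemma rec_lemma (l : ℕ → ℝ) (hl : ∀ n, l n ∈ Set.Icc (0:ℝ) 1) (hns : ¬ Summable l)
    (a b : ℕ → ℝ) (c : ℝ)
    (hrec : ∀ n, a (n+1) ≤ (1 - l n) * a n + l n * b n)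
    (hb : ∀ᶠ n in atTop, b n ≤ c) {ε : ℝ} (hε : 0 < ε) :
    ∀ᶠ n in atTop, a n ≤ c + ε := by
  obtain ⟨N, hN⟩ := Filter.eventually_atTop.mp hb
  set e : ℕ → ℝ := fun n => max (a n - c) 0 with he
  have he0 : ∀ n, 0 ≤ e n := fun n => le_max_right _ _
  have hestep : ∀ n, N ≤ n → e (n+1) ≤ (1 - l n) * e n := by
    intro n hn
    have hb' := hN n hn
    have hl1 := (hl n).1
    have hl2 := (hl n).2
    have h1 : a (n+1) - c ≤ (1 - l n) * (a n - c) := by nlinarith [hrec n]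
    have h3 : (1 - l n) * (a n - c) ≤ (1 - l n) * e n :=
      mul_le_mul_of_nonneg_left (le_max_left _ _) (by linarith)
    have h4 : (0:ℝ) ≤ (1 - l n) * e n := mul_nonneg (by linarith) (he0 n)
    exact max_le (le_trans h1 h3) h4
  have hmono : ∀ m, N ≤ m → ∀ p, e (m + p) ≤ e m := by
    intro m hm p
    induction p with
    | zero => simp
    | succ p ih =>
      have h1 : e (m + p + 1) ≤ (1 - l (m + p)) * e (m + p) := hestep _ (by omega)
      have h2 : (1 - l (m + p)) * e (m + p) ≤ e (m + p) := by
        have := (hl (m+p)).1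
        nlinarith [he0 (m+p)]
      calc e (m + (p+1)) = e (m + p + 1) := by ring_nf
        _ ≤ e (m + p) := le_trans h1 h2
        _ ≤ e m := ih
  have hexp : ∀ k, e (N + k) ≤ e N * Real.exp (-(∑ i ∈ Finset.range k, l (N + i))) := by
    intro k
    induction k with
    | zero => simp
    | succ k ih =>
      have h1 : e (N + (k+1)) ≤ (1 - l (N + k)) * e (N + k) := by
        have : N + (k+1) = (N + k) + 1 := by ring
        rw [this]
        exact hestep _ (by omega)
      have h2 : (1 - l (N + k)) * e (N + k) ≤ Real.exp (-(l (N+k))) * (e N * Real.exp (-(∑ i ∈ Finset.range k, l (N + i)))) := by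
        apply mul_le_mul
        · linarith [Real.add_one_le_exp (-(l (N+k)))]
        · exact ih
        · exact he0 _
        · positivity
      calc e (N + (k+1)) ≤ _ := le_trans h1 h2
        _ = e N * Real.exp (-(∑ i ∈ Finset.range (k+1), l (N + i))) := by
          rw [Finset.sum_range_succ, neg_add, Real.exp_add]
          ring
  have hns' : ¬ Summable (fun i => l (N + i)) := by
    intro h
    exact hns ((summable_nat_add_iff N).mp (h.congr fun i => by rw [add_comm]))
  have hS : Tendsto (fun k => ∑ i ∈ Finset.range k, l (N + i)) atTop atTop :=
    (not_summable_iff_tendsto_nat_atTop_of_nonneg (fun i => (hl _).1)).mp hns'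
  have h0 : Tendsto (fun k => e N * Real.exp (-(∑ i ∈ Finset.range k, l (N + i)))) atTop (nhds 0) := by
    have := tendsto_const_nhds (x := e N) (f := atTop (α := ℕ)) |>.mul
      (Real.tendsto_exp_neg_atTop_nhds_zero.comp hS)
    simpa using this
  obtain ⟨K, hK⟩ := (h0.eventually (gt_mem_nhds hε)).exists
  refine Filter.eventually_atTop.mpr ⟨N + K, fun n hn => ?_⟩
  obtain ⟨p, rfl⟩ := Nat.exists_eq_add_of_le hn
  have h5 : e (N + K + p) ≤ e (N + K) := hmono (N + K) (by omega) p
  have h6 : e (N + K) ≤ e N * Real.exp (-(∑ i ∈ Finset.range K, l (N + i))) := hexp K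
  have h7 : a (N + K + p) - c ≤ e (N + K + p) := le_max_left _ _
  linarith



private lemma center_exists {X : Type*} [MetricSpace X] [CompleteSpace X] (H : WHyp X)
    (eta : ℝ → ℝ → ℝ) (hU : H.UnifConvex eta) (hmon : MonotoneModulus eta)
    (C : Set X) (hCcl : IsClosed C) (hCconv : H.ConvexSet C)
    (u : ℕ → X) (huC : ∀ n, u n ∈ C) (hub : Bornology.IsBounded (Set.range u)) :
    ∃ c ∈ C, ∀ y ∈ C, Filter.limsup (fun n => dist (u n) y) Filter.atTop ≤
      Filter.limsup (fun n => dist (u n) c) Filter.atTop → y = c := by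
  obtain ⟨R, hR⟩ := Metric.isBounded_range_iff.mp hub
  set L : X → ℝ := fun y => Filter.limsup (fun n => dist (u n) y) Filter.atTop with hLdef
  have hbd : ∀ y : X, ∀ n, dist (u n) y ≤ R + dist (u 0) y := fun y n =>
    (dist_triangle (u n) (u 0) y).trans (by linarith [hR n 0])
  have hL0 : ∀ y : X, 0 ≤ L y := fun y =>
    limsup_nonneg _ _ (hbd y) (fun n => dist_nonneg)
  have hLev : ∀ y : X, ∀ ε : ℝ, 0 < ε → ∀ᶠ n in atTop, dist (u n) y ≤ L y + ε := fun y ε hε =>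
    ev_le_limsup_add _ _ (hbd y) hε
  have hLle : ∀ y : X, ∀ a : ℝ, (∀ᶠ n in atTop, dist (u n) y ≤ a) → L y ≤ a := fun y a h =>
    limsup_le' _ (fun n => dist_nonneg) h
  set m := sInf (L '' C) with hmdef
  have hmne : (L '' C).Nonempty := ⟨L (u 0), u 0, huC 0, rfl⟩
  have hbb : BddBelow (L '' C) := ⟨0, by rintro x ⟨y, -, rfl⟩; exact hL0 y⟩
  have hm0 : 0 ≤ m := le_csInf hmne (by rintro x ⟨y, -, rfl⟩; exact hL0 y)
  have hmle : ∀ y ∈ C, m ≤ L y := fun y hy => csInf_le hbb ⟨y, hy, rfl⟩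
  have F1 : ∀ y z : X, dist y z ≤ L y + L z := by
    intro y z
    apply le_of_forall_pos_le_add'
    intro ε hε
    obtain ⟨n, h1, h2⟩ := ((hLev y (ε/2) (by linarith)).and (hLev z (ε/2) (by linarith))).exists
    calc dist y z ≤ dist (u n) y + dist (u n) z := dist_triangle_left _ _ _
      _ ≤ L y + L z + ε := by linarith
  have F2 : ∀ y z : X, L y ≤ L z + dist z y := by
    intro y z
    apply le_of_forall_pos_le_add'
    intro ε hε
    have h := (hLev z ε hε).mono fun n hn =>
      show dist (u n) y ≤ L z + dist z y + ε from (dist_triangle (u n) z y).trans (by linarith)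
    have h2 := hLle y (L z + dist z y + ε) h
    linarith
  have KEY : ∀ δ : ℝ, 0 < δ → ∃ α : ℝ, 0 < α ∧ ∀ y ∈ C, ∀ z ∈ C,
      L y ≤ m + α → L z ≤ m + α → dist y z ≤ δ := by
    intro δ hδ
    rcases eq_or_lt_of_le hm0 with hm | hmpos
    · refine ⟨δ/2, by linarith, fun y hy z hz h1 h2 => ?_⟩
      have := F1 y z
      rw [← hm] at h1 h2
      linarith
    · set δ' := min δ (m + 2) with hdpdef
      have hδ' : 0 < δ' := lt_min hδ (by linarith)
      set ε₀ := δ' / (m + 2) with he0def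
      have hm2 : (0:ℝ) < m + 2 := by linarith
      have hε₀ : ε₀ ∈ Set.Ioc (0:ℝ) 2 := by
        constructor
        · positivity
        · rw [he0def, div_le_iff₀ hm2]
          have : δ' ≤ m + 2 := min_le_right _ _
          linarith
      have hη := hU.1 (m + 2) ε₀ hm2 hε₀
      set h := eta (m + 2) ε₀ with hhdef
      set α := min 1 (h * m / 4) with hadef
      have hα : 0 < α := lt_min one_pos (div_pos (mul_pos hη.1 hmpos) (by norm_num))
      refine ⟨α, hα, fun y hy z hz h1 h2 => ?_⟩
      by_contra hcon
      push_neg at hcon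
      have hα1 : α ≤ 1 := min_le_left _ _
      have hα2 : α ≤ h * m / 4 := min_le_right _ _
      have hs : (0:ℝ) < m + 2*α := by linarith
      have hev : ∀ᶠ n in atTop, dist (u n) y ≤ m + 2*α ∧ dist (u n) z ≤ m + 2*α := by
        filter_upwards [hLev y α hα, hLev z α hα] with n hy' hz'
        constructor <;> linarith
      have hwC : H.W y z (1/2) ∈ C := hCconv y hy z hz (1/2) ⟨by norm_num, by norm_num⟩
      have hd : ε₀ * (m + 2*α) ≤ dist y z := by
        have e1 : ε₀ * (m + 2*α) ≤ ε₀ * (m + 2) :=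
          mul_le_mul_of_nonneg_left (by linarith) (le_of_lt hε₀.1)
        have e2 : ε₀ * (m + 2) = δ' := by
          rw [he0def]; field_simp
        have e3 : δ' ≤ δ := min_le_left _ _
        linarith
      have hUC : ∀ᶠ n in atTop,
          dist (u n) (H.W y z (1/2)) ≤ (1 - eta (m + 2*α) ε₀) * (m + 2*α) := by
        filter_upwards [hev] with n hn
        have := hU.2 (m + 2*α) ε₀ (u n) y z hs hε₀
          (by rw [dist_comm]; exact hn.1) (by rw [dist_comm]; exact hn.2) hd
        rwa [dist_comm]
      have hLw : L (H.W y z (1/2)) ≤ (1 - eta (m + 2*α) ε₀) * (m + 2*α) := hLle _ _ hUC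
      have hmon' : h ≤ eta (m + 2*α) ε₀ := hmon (m + 2*α) (m + 2) ε₀ hs (by linarith) hε₀
      have hmw := hmle _ hwC
      have hfin : m ≤ (1 - h) * (m + 2*α) := by nlinarith
      nlinarith [hη.1, hη.2]
  have hseq : ∀ k : ℕ, ∃ y, y ∈ C ∧ L y ≤ m + 1/(k+1) := by
    intro k
    have hpos : (0:ℝ) < 1/((k:ℝ)+1) := by positivity
    obtain ⟨x, hx, hlt⟩ := exists_lt_of_csInf_lt hmne (lt_add_of_pos_right m hpos)
    obtain ⟨yy, hyy, rfl⟩ := hx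
    exact ⟨yy, hyy, by linarith⟩
  choose y hyC hyL using hseq
  have hcau : CauchySeq y := by
    rw [Metric.cauchySeq_iff]
    intro ε hε
    obtain ⟨α, hα, hαprop⟩ := KEY (ε/2) (by linarith)
    obtain ⟨K, hK⟩ := exists_nat_one_div_lt (K := ℝ) hα
    refine ⟨K, fun a ha b hb => ?_⟩
    have key : ∀ j : ℕ, K ≤ j → L (y j) ≤ m + α := by
      intro j hj
      have e1 : 1/((j:ℝ)+1) ≤ 1/((K:ℝ)+1) := by
        have : (K:ℝ) ≤ j := by exact_mod_cast hj
        exact one_div_le_one_div_of_le (by positivity) (by linarith)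
      linarith [hyL j, hK]
    have := hαprop (y a) (hyC a) (y b) (hyC b) (key a ha) (key b hb)
    linarith
  obtain ⟨c, hc⟩ := cauchySeq_tendsto_of_complete hcau
  have hcC : c ∈ C := hCcl.mem_of_tendsto hc (Filter.Eventually.of_forall hyC)
  have hLc : L c ≤ m := by
    apply le_of_forall_pos_le_add'
    intro ε hε
    obtain ⟨N1, hN1⟩ := Metric.tendsto_atTop.mp hc (ε/2) (by linarith)
    obtain ⟨k, hk⟩ := exists_nat_one_div_lt (K := ℝ) (show (0:ℝ) < ε/2 by linarith)
    set j := max k N1 with hjdef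
    have e1 : L c ≤ L (y j) + dist (y j) c := F2 c (y j)
    have e2 : L (y j) ≤ m + 1/((j:ℝ)+1) := hyL j
    have e3 : 1/((j:ℝ)+1) ≤ 1/((k:ℝ)+1) := by
      have : (k:ℝ) ≤ j := by exact_mod_cast le_max_left k N1
      exact one_div_le_one_div_of_le (by positivity) (by linarith)
    have e4 : dist (y j) c < ε/2 := hN1 j (le_max_right _ _)
    linarith
  refine ⟨c, hcC, fun z hz hLz => ?_⟩
  have hLz' : L z ≤ L c := hLz
  have hdzc : dist z c ≤ 0 := by
    apply le_of_forall_pos_le_add'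
    intro δ hδ
    obtain ⟨α, hα, hαprop⟩ := KEY δ hδ
    have h1 : L z ≤ m + α := by linarith
    have h2 : L c ≤ m + α := by linarith
    have := hαprop z hz c hcC h1 h2
    linarith
  exact dist_le_zero.mp hdzc

private lemma W_one {X : Type*} [MetricSpace X] (H : WHyp X) (p q : X) : H.W p q 1 = q := by
  have h := H.W1 p q q 1 ⟨zero_le_one, le_refl 1⟩
  norm_num [dist_self] at h
  exact h.symm

private lemma km_picard {X : Type*} [MetricSpace X] (H : WHyp X) (T : X → X) (x : X) :
    ∀ n, H.kmSeq T (fun _ => (1:ℝ)) x n = T^[n] x := by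
  intro n
  induction n with
  | zero => rfl
  | succ n ih =>
    have hunf : H.kmSeq T (fun _ => (1:ℝ)) x (n+1) =
        H.W (H.kmSeq T (fun _ => (1:ℝ)) x n) (T (H.kmSeq T (fun _ => (1:ℝ)) x n)) 1 := rfl
    rw [hunf, W_one, ih, Function.iterate_succ_apply']

end Helpers

theorem stmt9 {X : Type*} [MetricSpace X] [CompleteSpace X] (H : WHyp X)
    (η : ℝ → ℝ → ℝ) (hU : H.UnifConvex η) (hmon : MonotoneModulus η)
    (C : Set X) (hCne : C.Nonempty) (hCcl : IsClosed C) (hCconv : H.ConvexSet C)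
    (T : X → X) (hT : Set.MapsTo T C C)
    (hTne : ∀ x ∈ C, ∀ y ∈ C, dist (T x) (T y) ≤ dist x y) :
    List.TFAE [
      -- (i) T has a fixed point
      ∃ p ∈ C, T p = p,
      -- (ii) there is a bounded sequence (u_n) in C with d(u_n, T u_n) → 0
      ∃ u : ℕ → X, (∀ n, u n ∈ C) ∧ Bornology.IsBounded (Set.range u) ∧
        Filter.Tendsto (fun n => dist (u n) (T (u n))) Filter.atTop (nhds 0),
      -- (iii) the Picard iterates are bounded for some x ∈ C
      ∃ x ∈ C, Bornology.IsBounded (Set.range (fun n => T^[n] x)),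
      -- (iv) the Picard iterates are bounded for all x ∈ C
      ∀ x ∈ C, Bornology.IsBounded (Set.range (fun n => T^[n] x)),
      -- (v) the KM iteration is bounded for some x ∈ C and some (λ_n) satisfying (a), (b) or (c)
      ∃ x ∈ C, ∃ l : ℕ → ℝ, (∀ n, l n ∈ Set.Icc (0:ℝ) 1) ∧
        ((∃ lam ∈ Set.Ioc (0:ℝ) 1, ∀ n, l n = lam) ∨
          Filter.Tendsto l Filter.atTop (nhds 1) ∨
          (Filter.limsup l Filter.atTop < 1 ∧ ¬ Summable fun n => l n)) ∧
        Bornology.IsBounded (Set.range (H.kmSeq T l x)),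
      -- (vi) the KM iteration is bounded for all x ∈ C and all (λ_n) in [0,1]
      ∀ x ∈ C, ∀ l : ℕ → ℝ, (∀ n, l n ∈ Set.Icc (0:ℝ) 1) →
        Bornology.IsBounded (Set.range (H.kmSeq T l x))] := by
  tfae_have 1 → 6 := by
    rintro ⟨p, hpC, hp⟩ x hx l hl
    have key : ∀ n, H.kmSeq T l x n ∈ C ∧ dist (H.kmSeq T l x n) p ≤ dist x p := by
      intro n
      induction n with
      | zero => exact ⟨hx, le_refl _⟩
      | succ n ih =>
        obtain ⟨hmem, hd⟩ := ih
        have hTm : T (H.kmSeq T l x n) ∈ C := hT hmem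
        refine ⟨hCconv _ hmem _ hTm _ (hl n), ?_⟩
        have hunf : H.kmSeq T l x (n+1) =
            H.W (H.kmSeq T l x n) (T (H.kmSeq T l x n)) (l n) := rfl
        have h1 := H.W1 (H.kmSeq T l x n) (T (H.kmSeq T l x n)) p (l n) (hl n)
        have h2 : dist p (T (H.kmSeq T l x n)) ≤ dist p (H.kmSeq T l x n) := by
          calc dist p (T (H.kmSeq T l x n)) = dist (T p) (T (H.kmSeq T l x n)) := by rw [hp]
            _ ≤ dist p (H.kmSeq T l x n) := hTne p hpC _ hmem
        have hl1 := (hl n).1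
        have hl2 := (hl n).2
        rw [hunf, dist_comm]
        calc dist p (H.W (H.kmSeq T l x n) (T (H.kmSeq T l x n)) (l n))
            ≤ (1 - l n) * dist p (H.kmSeq T l x n) + l n * dist p (T (H.kmSeq T l x n)) := h1
          _ ≤ dist p (H.kmSeq T l x n) := by nlinarith
          _ ≤ dist x p := by rw [dist_comm]; exact hd
    refine Metric.isBounded_range_iff.mpr ⟨2 * dist x p, fun i j => ?_⟩
    calc dist (H.kmSeq T l x i) (H.kmSeq T l x j)
        ≤ dist (H.kmSeq T l x i) p + dist p (H.kmSeq T l x j) := dist_triangle _ _ _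
      _ ≤ 2 * dist x p := by
          have k1 := (key i).2
          have k2 := (key j).2
          rw [dist_comm p]
          linarith
  tfae_have 6 → 4 := by
    intro h6 x hx
    have hb := h6 x hx (fun _ => (1:ℝ)) (fun n => ⟨zero_le_one, le_refl 1⟩)
    have heq : H.kmSeq T (fun _ => (1:ℝ)) x = fun n => T^[n] x := funext (km_picard H T x)
    rwa [heq] at hb
  tfae_have 4 → 3 := fun h4 => ⟨hCne.choose, hCne.choose_spec, h4 _ hCne.choose_spec⟩
  tfae_have 3 → 5 := by
    rintro ⟨x, hx, hb⟩
    refine ⟨x, hx, fun _ => (1:ℝ), fun n => ⟨zero_le_one, le_refl 1⟩,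
      Or.inl ⟨1, ⟨one_pos, le_refl 1⟩, fun n => rfl⟩, ?_⟩
    have heq : H.kmSeq T (fun _ => (1:ℝ)) x = fun n => T^[n] x := funext (km_picard H T x)
    rwa [heq]
  tfae_have 1 → 2 := by
    rintro ⟨p, hpC, hp⟩
    refine ⟨fun _ => p, fun _ => hpC, ?_, ?_⟩
    · exact Metric.isBounded_range_iff.mpr ⟨0, fun i j => by simp⟩
    · simp only [hp, dist_self]
      exact tendsto_const_nhds
  tfae_have 2 → 1 := by
    rintro ⟨u, huC, hub, htend⟩
    obtain ⟨c, hcC, hcu⟩ := center_exists H η hU hmon C hCcl hCconv u huC hub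
    obtain ⟨R, hR⟩ := Metric.isBounded_range_iff.mp hub
    have hbd : ∀ y : X, ∀ n, dist (u n) y ≤ R + dist (u 0) y := fun y n =>
      (dist_triangle (u n) (u 0) y).trans (by linarith [hR n 0])
    have hkey : Filter.limsup (fun n => dist (u n) (T c)) Filter.atTop ≤
        Filter.limsup (fun n => dist (u n) c) Filter.atTop := by
      apply le_of_forall_pos_le_add'
      intro ε hε
      apply limsup_le' _ (fun n => dist_nonneg)
      have h1 : ∀ᶠ n in atTop, dist (u n) (T (u n)) < ε/2 :=
        htend.eventually (gt_mem_nhds (by linarith))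
      have h2 : ∀ᶠ n in atTop, dist (u n) c ≤
          Filter.limsup (fun n => dist (u n) c) Filter.atTop + ε/2 :=
        ev_le_limsup_add _ _ (hbd c) (by linarith)
      filter_upwards [h1, h2] with n hn1 hn2
      calc dist (u n) (T c) ≤ dist (u n) (T (u n)) + dist (T (u n)) (T c) := dist_triangle _ _ _
        _ ≤ ε/2 + dist (u n) c := by linarith [hTne (u n) (huC n) c hcC]
        _ ≤ Filter.limsup (fun n => dist (u n) c) Filter.atTop + ε := by linarith
    exact ⟨c, hcC, hcu (T c) (hT hcC) hkey⟩
  tfae_have 5 → 1 := by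
    rintro ⟨x, hx, l, hl, hcase, hub⟩
    have hns : ¬ Summable l := by
      rcases hcase with ⟨lam, hlam, hconst⟩ | hto1 | ⟨-, hns⟩
      · intro hs
        have h1 : Tendsto l atTop (nhds 0) := hs.tendsto_atTop_zero
        have h2 : Tendsto l atTop (nhds lam) := by
          have : l = fun _ => lam := funext hconst
          rw [this]
          exact tendsto_const_nhds
        have h3 := tendsto_nhds_unique h1 h2
        exact (ne_of_gt hlam.1) h3.symm
      · intro hs
        have h3 := tendsto_nhds_unique hs.tendsto_atTop_zero hto1
        norm_num at h3
      · exact hns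
    have huC : ∀ n, H.kmSeq T l x n ∈ C := by
      intro n
      induction n with
      | zero => exact hx
      | succ n ih => exact hCconv _ ih _ (hT ih) _ (hl n)
    obtain ⟨c, hcC, hcu⟩ := center_exists H η hU hmon C hCcl hCconv _ huC hub
    obtain ⟨R, hR⟩ := Metric.isBounded_range_iff.mp hub
    have hbd : ∀ y : X, ∀ n, dist (H.kmSeq T l x n) y ≤ R + dist (H.kmSeq T l x 0) y :=
      fun y n => (dist_triangle _ (H.kmSeq T l x 0) y).trans (by linarith [hR n 0])
    have hrec : ∀ n, dist (H.kmSeq T l x (n+1)) (T c) ≤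
        (1 - l n) * dist (H.kmSeq T l x n) (T c) + l n * dist (H.kmSeq T l x n) c := by
      intro n
      have hunf : H.kmSeq T l x (n+1) =
          H.W (H.kmSeq T l x n) (T (H.kmSeq T l x n)) (l n) := rfl
      have h1 := H.W1 (H.kmSeq T l x n) (T (H.kmSeq T l x n)) (T c) (l n) (hl n)
      have h2 : dist (T (H.kmSeq T l x n)) (T c) ≤ dist (H.kmSeq T l x n) c :=
        hTne _ (huC n) c hcC
      have hl1 := (hl n).1
      rw [hunf, dist_comm]
      calc dist (T c) (H.W (H.kmSeq T l x n) (T (H.kmSeq T l x n)) (l n))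
          ≤ (1 - l n) * dist (T c) (H.kmSeq T l x n)
            + l n * dist (T c) (T (H.kmSeq T l x n)) := h1
        _ = (1 - l n) * dist (H.kmSeq T l x n) (T c)
            + l n * dist (T (H.kmSeq T l x n)) (T c) := by
            rw [dist_comm (T c) (H.kmSeq T l x n), dist_comm (T c) (T (H.kmSeq T l x n))]
        _ ≤ (1 - l n) * dist (H.kmSeq T l x n) (T c) + l n * dist (H.kmSeq T l x n) c := by
            have := mul_le_mul_of_nonneg_left h2 hl1
            linarith
    have hkey : Filter.limsup (fun n => dist (H.kmSeq T l x n) (T c)) Filter.atTop ≤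
        Filter.limsup (fun n => dist (H.kmSeq T l x n) c) Filter.atTop := by
      apply le_of_forall_pos_le_add'
      intro ε hε
      have hb : ∀ᶠ n in atTop, dist (H.kmSeq T l x n) c ≤
          Filter.limsup (fun n => dist (H.kmSeq T l x n) c) Filter.atTop + ε/2 :=
        ev_le_limsup_add _ _ (hbd c) (by linarith)
      have hrl := rec_lemma l hl hns (fun n => dist (H.kmSeq T l x n) (T c))
        (fun n => dist (H.kmSeq T l x n) c)
        (Filter.limsup (fun n => dist (H.kmSeq T l x n) c) Filter.atTop + ε/2) hrec hb
        (show (0:ℝ) < ε/2 by linarith)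
      have h3 := limsup_le' (fun n => dist (H.kmSeq T l x n) (T c)) (fun n => dist_nonneg) hrl
      linarith
    exact ⟨c, hcC, hcu (T c) (hT hcC) hkey⟩
  tfae_finish
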